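/- Let (Ω, 𝓕, P) be a probability space, X : Ω → ℝ^d a random vector generating the σ-algebra σ(X), D : Ω → {0,1} a binary random variable, and Y an integrable random variable. Assume (weak unconfoundedness) that Y and D are conditionally independent given σ(X), and (overlap) that E[D | σ(X)] > 0 almost surely. Then E[Y] = E[ E[Y·D | σ(X)] / E[D | σ(X)] ]. -/

import Mathlib

open MeasureTheory ProbabilityTheory

/-- Identification of the expected potential outcome: if `Y` and the
binary treatment indicator `D` are conditionally independent given `σ(X)` (weak
unconfoundedness) and `E[D | σ(X)] > 0` a.s. (overlap), then
`E[Y] = E[ E[Y·D | σ(X)] / E[D | σ(X)] ]`. -/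
theorem expected_potential_outcome_identification
    {Ω : Type*} [MeasurableSpace Ω] [StandardBorelSpace Ω] {d : ℕ}
    (P : Measure Ω) [IsProbabilityMeasure P]
    (X : Ω → (Fin d → ℝ)) (hX : Measurable X)
    (D : Ω → ℝ) (hD : Measurable D) (hD01 : ∀ ω, D ω = 0 ∨ D ω = 1)
    (Y : Ω → ℝ) (hY_meas : Measurable Y) (hY_int : Integrable Y P)
    (hindep : CondIndepFun (MeasurableSpace.comap X inferInstance) hX.comap_le Y D P)
    (hoverlap : ∀ᵐ ω ∂P, 0 < (P[D | MeasurableSpace.comap X inferInstance]) ω) :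
    ∫ ω, Y ω ∂P =
      ∫ ω, (P[fun ω' => Y ω' * D ω' | MeasurableSpace.comap X inferInstance]) ω /
        (P[D | MeasurableSpace.comap X inferInstance]) ω ∂P := by
  rename_i mΩ _sb _ip
  have hm := hX.comap_le
  have hmY := hY_meas.comap_le
  have hA : MeasurableSet (D ⁻¹' {1}) := hD (measurableSet_singleton 1)
  set m : MeasurableSpace Ω := MeasurableSpace.comap X inferInstance with hm_def
  set mY : MeasurableSpace Ω := MeasurableSpace.comap Y inferInstance with hmY_def
  have hn := sup_le hm hmY
  set n : MeasurableSpace Ω := m ⊔ mY with hn_def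
  -- D as an indicator
  set A : Set Ω := D ⁻¹' {1} with hA_def
  letI mΩ' : MeasurableSpace Ω := mΩ
  have hD_eq : D = A.indicator (fun _ => (1:ℝ)) := by
    funext ω
    rcases hD01 ω with h | h <;>
      simp [Set.indicator_apply, hA_def, Set.mem_preimage, h]
  have hD_int : Integrable D P := by
    rw [hD_eq]; exact (integrable_const (1:ℝ) (μ := P)).indicator hA
  have hYD_int : Integrable (fun ω => Y ω * D ω) P := by
    refine hY_int.mono (hY_meas.mul hD).aestronglyMeasurable ?_
    filter_upwards with ω
    rcases hD01 ω with h | h <;> simp [h, abs_nonneg]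
  -- bounds on E[D|m]
  have hDm_nonneg : 0 ≤ᵐ[P] P[D|m] := by
    refine condExp_nonneg (ae_of_all _ fun ω => ?_)
    rcases hD01 ω with h | h <;> simp [h]
  have hDm_le : P[D|m] ≤ᵐ[P] fun _ => (1:ℝ) := by
    have h1 : P[D|m] ≤ᵐ[P] P[(fun _ => (1:ℝ))|m] := by
      refine condExp_mono hD_int (integrable_const 1) (ae_of_all _ fun ω => ?_)
      rcases hD01 ω with h | h <;> simp [h]
    filter_upwards [h1] with ω hω
    rwa [condExp_const hm] at hω
  have hDm_bound : ∀ᵐ ω ∂P, ‖(P[D|m]) ω‖ ≤ 1 := by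
    filter_upwards [hDm_nonneg, hDm_le] with ω h0 h1
    simp only [Pi.zero_apply] at h0
    rw [Real.norm_eq_abs, abs_le]; exact ⟨by linarith, h1⟩
  -- factorization of conditional probabilities from conditional independence
  have hfact : ∀ (B : Set ℝ), MeasurableSet B →
      (P⟦Y ⁻¹' B ∩ A | m⟧) =ᵐ[P] fun ω => (P⟦Y ⁻¹' B | m⟧) ω * (P⟦A | m⟧) ω :=
    fun B hB => (condIndepFun_iff_condExp_inter_preimage_eq_mul hY_meas hD).mp hindep
      B {1} hB (measurableSet_singleton 1)
  -- E[D|n] = E[D|m]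
  have hDn_eq : (P[D|n]) =ᵐ[P] (P[D|m]) := by
    refine (ae_eq_condExp_of_forall_setIntegral_eq hn hD_int
      (fun s _ _ => integrable_condExp.integrableOn) ?_
      ((stronglyMeasurable_condExp.mono (le_sup_left : m ≤ n)).aestronglyMeasurable)).symm
    intro u hu _
    have hgen : n = MeasurableSpace.generateFrom
        {u : Set Ω | ∃ s t, MeasurableSet[m] s ∧ MeasurableSet[mY] t ∧ u = s ∩ t} := by
      apply le_antisymm
      · refine sup_le ?_ ?_
        · intro s hs
          exact MeasurableSpace.measurableSet_generateFrom
            ⟨s, Set.univ, hs, MeasurableSet.univ, (Set.inter_univ s).symm⟩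
        · intro t ht
          exact MeasurableSpace.measurableSet_generateFrom
            ⟨Set.univ, t, MeasurableSet.univ, ht, (Set.univ_inter t).symm⟩
      · refine MeasurableSpace.generateFrom_le ?_
        rintro u ⟨s, t, hs, ht, rfl⟩
        exact ((le_sup_left : m ≤ n) s hs).inter ((le_sup_right : mY ≤ n) t ht)
    have hpi : IsPiSystem
        {u : Set Ω | ∃ s t, MeasurableSet[m] s ∧ MeasurableSet[mY] t ∧ u = s ∩ t} := by
      rintro u ⟨s1, t1, hs1, ht1, rfl⟩ v ⟨s2, t2, hs2, ht2, rfl⟩ -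
      refine ⟨s1 ∩ s2, t1 ∩ t2, hs1.inter hs2, ht1.inter ht2, ?_⟩
      ext ω; simp only [Set.mem_inter_iff]; tauto
    refine MeasurableSpace.induction_on_inter (m := n)
      (C := fun u _ => ∫ ω in u, (P[D|m]) ω ∂P = ∫ ω in u, D ω ∂P)
      hgen hpi ?_ ?_ ?_ ?_ u hu
    · simp
    · rintro u ⟨s, t, hs, ht, rfl⟩
      obtain ⟨B, hB, rfl⟩ := ht
      set t : Set Ω := Y ⁻¹' B with ht_def
      have htΩ := hY_meas hB
      have hsΩ := hm s hs
      have h1t_int := (integrable_const (1:ℝ) (μ := P)).indicator htΩ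
      -- RHS
      have hrhs : ∫ ω in s ∩ t, D ω ∂P
          = ∫ ω in s, (fun ω => (P⟦t | m⟧) ω * (P⟦A | m⟧) ω) ω ∂P := by
        rw [← setIntegral_indicator htΩ]
        have : t.indicator D = (t ∩ A).indicator (fun _ => (1:ℝ)) := by
          rw [hD_eq, Set.indicator_indicator]
        rw [this,
          ← setIntegral_condExp hm ((integrable_const (1:ℝ) (μ := P)).indicator (htΩ.inter hA)) hs]
        exact setIntegral_congr_ae hsΩ ((hfact B hB).mono fun ω hω _ => hω)
      -- LHS
      have hprod_int : Integrable ((P[D|m]) * t.indicator fun _ => (1:ℝ)) P :=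
        Integrable.bdd_mul (c := 1) h1t_int
          ((stronglyMeasurable_condExp.mono hm).aestronglyMeasurable) hDm_bound
      have hpull : P[(P[D|m]) * t.indicator (fun _ => (1:ℝ)) | m]
          =ᵐ[P] (P[D|m]) * P[t.indicator (fun _ => (1:ℝ)) | m] :=
        condExp_mul_of_stronglyMeasurable_left stronglyMeasurable_condExp hprod_int h1t_int
      have hlhs : ∫ ω in s ∩ t, (P[D|m]) ω ∂P
          = ∫ ω in s, (fun ω => (P[D|m]) ω * (P⟦t | m⟧) ω) ω ∂P := by
        rw [← setIntegral_indicator htΩ]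
        have h2 : t.indicator (P[D|m]) = (P[D|m]) * t.indicator (fun _ => (1:ℝ)) := by
          funext ω
          by_cases hω : ω ∈ t <;> simp [Set.indicator_apply, hω]
        rw [h2, ← setIntegral_condExp hm hprod_int hs]
        exact setIntegral_congr_ae hsΩ (hpull.mono fun ω hω _ => hω)
      rw [hlhs, hrhs]
      refine setIntegral_congr_fun hsΩ fun ω _ => ?_
      have : P[D|m] = P⟦A | m⟧ := by rw [hD_eq]
      rw [this, mul_comm]
    · intro u hu h
      have huΩ := hn u hu
      have h1 := integral_add_compl huΩ (integrable_condExp (f := D) (m := m) (μ := P))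
      have h2 := integral_add_compl huΩ hD_int
      have h3 := integral_condExp hm (f := D) (μ := P)
      linarith
    · intro f hdisj hmeas hC
      rw [integral_iUnion (fun i => hn _ (hmeas i)) hdisj integrable_condExp.integrableOn,
        integral_iUnion (fun i => hn _ (hmeas i)) hdisj hD_int.integrableOn]
      exact tsum_congr hC
  -- key factorization of the conditional expectation
  have hDmY_int : Integrable ((P[D|m]) * Y) P :=
    Integrable.bdd_mul (c := 1) hY_int
      ((stronglyMeasurable_condExp.mono hm).aestronglyMeasurable) hDm_bound
  have hkey : (P[fun ω => Y ω * D ω | m]) =ᵐ[P] fun ω => (P[Y|m]) ω * (P[D|m]) ω := by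
    refine (ae_eq_condExp_of_forall_setIntegral_eq hm hYD_int ?_ ?_ ?_).symm
    · intro s _ _
      refine (Integrable.bdd_mul (c := 1) (integrable_condExp (f := Y) (m := m) (μ := P))
        ((stronglyMeasurable_condExp.mono hm).aestronglyMeasurable) hDm_bound).congr
        (ae_of_all _ fun ω => ?_) |>.integrableOn
      exact mul_comm _ _
    · intro s hs _
      have hsΩ := hm s hs
      have hsn : MeasurableSet[n] s := (le_sup_left : m ≤ n) s hs
      have hpull2 : P[(P[D|m]) * Y | m] =ᵐ[P] (P[D|m]) * P[Y|m] :=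
        condExp_mul_of_stronglyMeasurable_left stronglyMeasurable_condExp hDmY_int hY_int
      have hYn : StronglyMeasurable[n] Y :=
        ((comap_measurable Y).mono (le_sup_right : mY ≤ n) le_rfl).stronglyMeasurable
      have hpull3 : P[Y * D | n] =ᵐ[P] Y * P[D|n] :=
        condExp_mul_of_stronglyMeasurable_left (m := n) hYn hYD_int hD_int
      calc ∫ ω in s, (P[Y|m]) ω * (P[D|m]) ω ∂P
          = ∫ ω in s, ((P[D|m]) * P[Y|m]) ω ∂P := by
            refine setIntegral_congr_fun hsΩ fun ω _ => mul_comm _ _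
        _ = ∫ ω in s, (P[(P[D|m]) * Y | m]) ω ∂P :=
            (setIntegral_congr_ae hsΩ (hpull2.mono fun ω hω _ => hω.symm))
        _ = ∫ ω in s, ((P[D|m]) * Y) ω ∂P := setIntegral_condExp hm hDmY_int hs
        _ = ∫ ω in s, (Y * P[D|n]) ω ∂P := by
            refine setIntegral_congr_ae hsΩ (hDn_eq.mono fun ω hω _ => ?_)
            simp only [Pi.mul_apply]; rw [hω, mul_comm]
        _ = ∫ ω in s, (P[Y * D | n]) ω ∂P :=
            (setIntegral_congr_ae hsΩ (hpull3.mono fun ω hω _ => hω.symm))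
        _ = ∫ ω in s, (Y * D) ω ∂P := setIntegral_condExp hn hYD_int hsn
        _ = ∫ ω in s, Y ω * D ω ∂P := rfl
    · exact (stronglyMeasurable_condExp.mul stronglyMeasurable_condExp).aestronglyMeasurable
  -- conclude
  have hratio : (fun ω => (P[fun ω' => Y ω' * D ω' | m]) ω / (P[D|m]) ω) =ᵐ[P] P[Y|m] := by
    filter_upwards [hkey, hoverlap] with ω h1 h2
    rw [h1]
    exact mul_div_cancel_right₀ _ (ne_of_gt h2)
  rw [integral_congr_ae hratio, integral_condExp hm]
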